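/- Let A be a commutative ring and r ≥ 0 an integer. Suppose given a commutative diagram of A-modules with exact rows F →^α M →^β N → 0 and F' →^{α'} M' →^{β'} N' → 0, together with vertical maps h : F → F', f : M → M', g : N → N' making the diagram commute, where F and F' are free A-modules of rank s ≤ r. Let φ : (⋀^{r−s}_A N) ⊗_A (⋀^s_A F) → ⋀^r_A M and φ' : (⋀^{r−s}_A N') ⊗_A (⋀^s_A F') → ⋀^r_A M' be the unique maps satisfying φ((⋀^{r−s}β)(a) ⊗ b) = a ∧ (⋀^s α)(b) and φ'((⋀^{r−s}β')(a') ⊗ b') = a' ∧ (⋀^s α')(b'). Then (⋀^r f) ∘ φ = φ' ∘ ((⋀^{r−s} g) ⊗ (⋀^s h)). -/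

import Mathlib

open ExteriorAlgebra TensorProduct

/-- The map induced by a linear map `f : M →ₗ[R] N` on `n`-th exterior powers. -/
noncomputable def expMap {R : Type*} [CommRing R] {M N : Type*} [AddCommGroup M] [Module R M]
    [AddCommGroup N] [Module R N] (n : ℕ) (f : M →ₗ[R] N) :
    ⋀[R]^n M →ₗ[R] ⋀[R]^n N :=
  (ExteriorAlgebra.map f).toLinearMap.restrict (p := ⋀[R]^n M) (q := ⋀[R]^n N)
    (by
      intro x hx
      rw [← ExteriorAlgebra.ιMulti_span_fixedDegree] at hx
      induction hx using Submodule.span_induction with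
      | mem y hy =>
          obtain ⟨v, rfl⟩ := hy
          show ExteriorAlgebra.map f (ExteriorAlgebra.ιMulti R n v) ∈ _
          rw [ExteriorAlgebra.map_apply_ιMulti]
          exact ExteriorAlgebra.ιMulti_range R n (Set.mem_range_self _)
      | zero => simp
      | add y z _ _ hy hz => simpa [map_add] using Submodule.add_mem _ hy hz
      | smul a y _ hy => simpa [map_smul] using Submodule.smul_mem _ a hy)


lemma expMap_coe {R : Type*} [CommRing R] {M N : Type*} [AddCommGroup M] [Module R M]
    [AddCommGroup N] [Module R N] (n : ℕ) (f : M →ₗ[R] N) (x : ⋀[R]^n M) :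
    (expMap n f x : ExteriorAlgebra R N) = ExteriorAlgebra.map f x := rfl

lemma expMap_surjective {R : Type*} [CommRing R] {M N : Type*} [AddCommGroup M] [Module R M]
    [AddCommGroup N] [Module R N] (n : ℕ) (f : M →ₗ[R] N) (hf : Function.Surjective f) :
    Function.Surjective (expMap n f) := by
  intro y
  obtain ⟨x, hx⟩ := y
  have hx' := hx
  rw [← ExteriorAlgebra.ιMulti_span_fixedDegree] at hx'
  suffices h : ∃ z : ⋀[R]^n M, ExteriorAlgebra.map f (z : ExteriorAlgebra R M) = x by
    obtain ⟨z, hz⟩ := h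
    exact ⟨z, Subtype.ext (by rw [expMap_coe, hz])⟩
  clear hx
  induction hx' using Submodule.span_induction with
  | mem y hy =>
      obtain ⟨v, rfl⟩ := hy
      refine ⟨⟨ExteriorAlgebra.ιMulti R n (fun i => Function.surjInv hf (v i)),
        ExteriorAlgebra.ιMulti_range R n (Set.mem_range_self _)⟩, ?_⟩
      rw [ExteriorAlgebra.map_apply_ιMulti]
      congr 1
      funext i
      simp [Function.surjInv_eq hf]
  | zero => exact ⟨0, by simp⟩
  | add y z _ _ hy hz =>
      obtain ⟨a, ha⟩ := hy; obtain ⟨b, hb⟩ := hz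
      exact ⟨a + b, by simp [ha, hb]⟩
  | smul a y _ hy =>
      obtain ⟨b, hb⟩ := hy
      exact ⟨a • b, by simp [hb]⟩

/-- Lemma 2.2.  Given a commutative diagram of `A`-modules with exact rows
`F →^α M →^β N → 0` and `F' →^{α'} M' →^{β'} N' → 0`, vertical maps `h : F → F'`,
`f : M → M'`, `g : N → N'`, where `F`, `F'` are free of rank `s ≤ r`, and given the unique maps
`φ : (⋀^{r-s} N) ⊗ (⋀^s F) → ⋀^r M` and `φ' : (⋀^{r-s} N') ⊗ (⋀^s F') → ⋀^r M'` with
`φ((⋀^{r-s}β)(a) ⊗ b) = a ∧ (⋀^s α)(b)` and `φ'((⋀^{r-s}β')(a') ⊗ b') = a' ∧ (⋀^s α')(b')`,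
we have `(⋀^r f) ∘ φ = φ' ∘ ((⋀^{r-s} g) ⊗ (⋀^s h))`. -/
theorem stark_systems_stmt1 (A : Type*) [CommRing A] (F M N F' M' N' : Type*)
    [AddCommGroup F] [Module A F] [AddCommGroup M] [Module A M] [AddCommGroup N] [Module A N]
    [AddCommGroup F'] [Module A F'] [AddCommGroup M'] [Module A M']
    [AddCommGroup N'] [Module A N']
    (s r : ℕ) (hsr : s ≤ r) (bF : Module.Basis (Fin s) A F) (bF' : Module.Basis (Fin s) A F')
    (α : F →ₗ[A] M) (β : M →ₗ[A] N) (α' : F' →ₗ[A] M') (β' : M' →ₗ[A] N')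
    (h : F →ₗ[A] F') (f : M →ₗ[A] M') (g : N →ₗ[A] N')
    (hexact : Function.Exact α β) (hsurj : Function.Surjective β)
    (hexact' : Function.Exact α' β') (hsurj' : Function.Surjective β')
    (hcomm₁ : f ∘ₗ α = α' ∘ₗ h) (hcomm₂ : g ∘ₗ β = β' ∘ₗ f)
    (φ : (⋀[A]^(r - s) N) ⊗[A] (⋀[A]^s F) →ₗ[A] ⋀[A]^r M)
    (hφ : ∀ (a : ⋀[A]^(r - s) M) (b : ⋀[A]^s F) (m : ⋀[A]^r M),
      (m : ExteriorAlgebra A M) =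
          (a : ExteriorAlgebra A M) * ((expMap s α b : ⋀[A]^s M) : ExteriorAlgebra A M) →
      φ (expMap (r - s) β a ⊗ₜ[A] b) = m)
    (φ' : (⋀[A]^(r - s) N') ⊗[A] (⋀[A]^s F') →ₗ[A] ⋀[A]^r M')
    (hφ' : ∀ (a' : ⋀[A]^(r - s) M') (b' : ⋀[A]^s F') (m' : ⋀[A]^r M'),
      (m' : ExteriorAlgebra A M') =
          (a' : ExteriorAlgebra A M') * ((expMap s α' b' : ⋀[A]^s M') : ExteriorAlgebra A M') →
      φ' (expMap (r - s) β' a' ⊗ₜ[A] b') = m') :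
    (expMap r f) ∘ₗ φ = φ' ∘ₗ (TensorProduct.map (expMap (r - s) g) (expMap s h)) := by
  apply TensorProduct.ext'
  intro a b
  obtain ⟨a₀, rfl⟩ := expMap_surjective (r - s) β hsurj a
  have hmem : (a₀ : ExteriorAlgebra A M) * ((expMap s α b : ⋀[A]^s M) : ExteriorAlgebra A M)
      ∈ ⋀[A]^r M := by
    have hmm := Submodule.mul_mem_mul a₀.2 (expMap s α b).2
    rw [← pow_add, Nat.sub_add_cancel hsr] at hmm
    exact hmm
  set m : ⋀[A]^r M := ⟨_, hmem⟩ with hm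
  have h1 : φ (expMap (r - s) β a₀ ⊗ₜ[A] b) = m := hφ a₀ b m rfl
  have hgβ : expMap (r - s) g (expMap (r - s) β a₀) = expMap (r - s) β' (expMap (r - s) f a₀) := by
    apply Subtype.ext
    simp only [expMap_coe]
    rw [← AlgHom.comp_apply, ← AlgHom.comp_apply, ExteriorAlgebra.map_comp_map,
      ExteriorAlgebra.map_comp_map, hcomm₂]
  have h2 : φ' (expMap (r - s) g (expMap (r - s) β a₀) ⊗ₜ[A] expMap s h b)
      = expMap r f m := by
    rw [hgβ]
    apply hφ' (expMap (r - s) f a₀) (expMap s h b)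
    simp only [expMap_coe, hm]
    rw [map_mul]
    congr 1
    rw [← AlgHom.comp_apply, ← AlgHom.comp_apply, ExteriorAlgebra.map_comp_map,
      ExteriorAlgebra.map_comp_map, hcomm₁]
  simp only [LinearMap.comp_apply, TensorProduct.map_tmul, h1, h2]
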